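/- For every integer n ≥ 2 and every real c with 0 < c ≤ 1/2 satisfying log n ≥ 2σ·log(1/c), either f(n) ≥ 1/(4c) or f(n) ≥ k^j, where k = ⌊(σ·log(1/c) − 1)/log(2/ε)⌋ and j = ⌊log n/(4σ·log(1/c))⌋. -/

import Mathlib

open SimpleGraph
open scoped Classical

/-- A cograph is a graph with no induced path on 4 vertices. -/
def IsCograph {V : Type} (G : SimpleGraph V) : Prop :=
  ¬ Nonempty (pathGraph 4 ↪g G)

/-- `phi G` is the maximum number of vertices of an induced subgraph of `G`
that is a cograph. -/
noncomputable def phi {n : ℕ} (G : SimpleGraph (Fin n)) : ℕ :=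
  sSup {k | ∃ s : Finset (Fin n), s.card = k ∧ IsCograph (G.induce (s : Set (Fin n)))}

/-- A class of graphs (one predicate for each number of vertices) is hereditary if it is
closed under isomorphic copies of induced subgraphs. -/
def Hereditary (I : ∀ n : ℕ, SimpleGraph (Fin n) → Prop) : Prop :=
  ∀ (m n : ℕ) (G : SimpleGraph (Fin n)) (H : SimpleGraph (Fin m)),
    I n G → Nonempty (H ↪g G) → I m H

/-- `fI I x` is the minimum of `phi G` over graphs `G` in the class `I` with `⌈x⌉`
vertices. -/
noncomputable def fI (I : ∀ n : ℕ, SimpleGraph (Fin n) → Prop) (x : ℝ) : ℕ :=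
  sInf {m | ∃ G : SimpleGraph (Fin ⌈x⌉₊), I ⌈x⌉₊ G ∧ phi G = m}


-- basic cograph lemmas
lemma isCograph_of_embedding {V W : Type} {G : SimpleGraph V} {H : SimpleGraph W}
    (e : H ↪g G) (hG : IsCograph G) : IsCograph H :=
  fun ⟨p⟩ => hG ⟨e.comp p⟩

lemma isCograph_induce_subset {V : Type} (G : SimpleGraph V) {s t : Set V} (h : s ⊆ t)
    (hG : IsCograph (G.induce t)) : IsCograph (G.induce s) := by
  refine isCograph_of_embedding ⟨⟨Set.inclusion h, Set.inclusion_injective h⟩, ?_⟩ hG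
  intro a b
  simp [Set.inclusion]

lemma isCograph_image {V W : Type} {G : SimpleGraph V} {H : SimpleGraph W} [DecidableEq V]
    (e : H ↪g G) (s : Finset W) (hs : IsCograph (H.induce (s : Set W))) :
    IsCograph (G.induce ((s.image e : Finset V) : Set V)) := by
  have hmem : ∀ a : (s : Set W), (e a.1 : V) ∈ ((s.image e : Finset V) : Set V) := by
    intro a
    simp only [Finset.coe_image, Set.mem_image, Finset.mem_coe]
    exact ⟨a.1, a.2, rfl⟩
  have hsurj : ∀ b : ((s.image e : Finset V) : Set V), ∃ a : (s : Set W), (e a.1 : V) = b.1 := by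
    rintro ⟨b, hb⟩
    simp only [Finset.coe_image, Set.mem_image, Finset.mem_coe] at hb
    obtain ⟨a, ha, rfl⟩ := hb
    exact ⟨⟨a, ha⟩, rfl⟩
  have hinj : Function.Injective (fun a : (s : Set W) => (⟨e a.1, hmem a⟩ : ((s.image e : Finset V) : Set V))) := by
    intro a b hab
    simp only [Subtype.mk.injEq] at hab
    exact Subtype.ext (e.injective hab)
  let φ : H.induce (s : Set W) ≃g G.induce ((s.image e : Finset V) : Set V) :=
    { toEquiv := Equiv.ofBijective _ ⟨hinj, by rintro b; obtain ⟨a, ha⟩ := hsurj b; exact ⟨a, Subtype.ext ha⟩⟩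
      map_rel_iff' := by
        intro a b
        simp only [Equiv.ofBijective, Function.Embedding.coe_subtype, comap_adj]
        exact e.map_adj_iff }
  exact fun ⟨p⟩ => hs ⟨(φ.symm.toEmbedding).comp p⟩


section T2
variable {n : ℕ} {G : SimpleGraph (Fin n)}

example : True := trivial

lemma isCograph_empty (G : SimpleGraph (Fin n)) :
    IsCograph (G.induce ((∅ : Finset (Fin n)) : Set (Fin n))) := by
  rintro ⟨p⟩
  have := (p 0).2
  simp at this

lemma isCograph_singleton (G : SimpleGraph (Fin n)) (v : Fin n) :
    IsCograph (G.induce (({v} : Finset (Fin n)) : Set (Fin n))) := by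
  rintro ⟨p⟩
  have h0 := (p 0).2
  have h1 := (p 1).2
  simp only [Finset.coe_singleton, Set.mem_singleton_iff] at h0 h1
  have : p 0 = p 1 := Subtype.ext (h0.trans h1.symm)
  have := p.injective this
  simp at this

lemma phi_bddAbove (G : SimpleGraph (Fin n)) :
    BddAbove {k | ∃ s : Finset (Fin n), s.card = k ∧ IsCograph (G.induce (s : Set (Fin n)))} := by
  refine ⟨n, ?_⟩
  rintro k ⟨s, rfl, -⟩
  simpa using Finset.card_le_univ s

lemma phi_nonempty (G : SimpleGraph (Fin n)) :
    {k | ∃ s : Finset (Fin n), s.card = k ∧ IsCograph (G.induce (s : Set (Fin n)))}.Nonempty :=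
  ⟨0, ∅, Finset.card_empty, isCograph_empty G⟩

lemma le_phi {s : Finset (Fin n)} (h : IsCograph (G.induce (s : Set (Fin n)))) :
    s.card ≤ phi G :=
  le_csSup (phi_bddAbove G) ⟨s, rfl, h⟩

lemma phi_spec (G : SimpleGraph (Fin n)) :
    ∃ s : Finset (Fin n), s.card = phi G ∧ IsCograph (G.induce (s : Set (Fin n))) :=
  Nat.sSup_mem (phi_nonempty G) (phi_bddAbove G)

lemma phi_le_of_embedding {m : ℕ} {H : SimpleGraph (Fin m)} (e : H ↪g G) :
    phi H ≤ phi G := by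
  refine csSup_le (phi_nonempty H) ?_
  rintro k ⟨s, rfl, hs⟩
  have := isCograph_image e s hs
  have hcard : (s.image e).card = s.card := Finset.card_image_of_injective s e.injective
  calc s.card = (s.image e).card := hcard.symm
  _ ≤ phi G := le_phi this

end T2

section FIlem
variable (I : ∀ n : ℕ, SimpleGraph (Fin n) → Prop)

lemma fI_eq_sInf {x : ℝ} {m : ℕ} (h : ⌈x⌉₊ = m) :
    fI I x = sInf {k | ∃ G : SimpleGraph (Fin m), I m G ∧ phi G = k} := by
  unfold fI; rw [h]

variable {I}
variable (hI : Hereditary I) (hall : ∀ m : ℕ, ∃ G : SimpleGraph (Fin m), I m G)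

lemma fI_le_phi {m : ℕ} {G : SimpleGraph (Fin m)} (hG : I m G) : fI I (m : ℝ) ≤ phi G := by
  rw [fI_eq_sInf I (Nat.ceil_natCast m)]
  exact Nat.sInf_le ⟨G, hG, rfl⟩

include hall in
lemma fI_spec (x : ℝ) :
    ∃ G : SimpleGraph (Fin ⌈x⌉₊), I ⌈x⌉₊ G ∧ phi G = fI I x := by
  obtain ⟨G, hG⟩ := hall ⌈x⌉₊
  have hne : {k | ∃ G' : SimpleGraph (Fin ⌈x⌉₊), I ⌈x⌉₊ G' ∧ phi G' = k}.Nonempty :=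
    ⟨phi G, G, hG, rfl⟩
  exact Nat.sInf_mem hne

/-- the embedding of a finset subgraph -/
noncomputable def subEmb {n : ℕ} (s : Finset (Fin n)) : Fin s.card ↪ Fin n :=
  ⟨fun i => (s.equivFin.symm i : Fin n),
   fun a b h => by
    apply s.equivFin.symm.injective
    exact Subtype.ext h⟩

lemma subEmb_mem {n : ℕ} (s : Finset (Fin n)) (i : Fin s.card) : subEmb s i ∈ s :=
  (s.equivFin.symm i).2

noncomputable def subGraph {n : ℕ} (G : SimpleGraph (Fin n)) (s : Finset (Fin n)) :
    SimpleGraph (Fin s.card) := G.comap (subEmb s)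

noncomputable def subGraphEmb {n : ℕ} (G : SimpleGraph (Fin n)) (s : Finset (Fin n)) :
    subGraph G s ↪g G := SimpleGraph.Embedding.comap (subEmb s) G

include hI in
lemma subGraph_mem {n : ℕ} {G : SimpleGraph (Fin n)} (hG : I n G) (s : Finset (Fin n)) :
    I s.card (subGraph G s) :=
  hI _ _ G _ hG ⟨subGraphEmb G s⟩

include hI hall in
lemma fI_mono {x y : ℝ} (h : x ≤ y) : fI I x ≤ fI I y := by
  obtain ⟨G, hG, hphi⟩ := fI_spec hall y
  have hle : ⌈x⌉₊ ≤ ⌈y⌉₊ := Nat.ceil_mono h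
  obtain ⟨s, -, hcard⟩ := Finset.exists_subset_card_eq (s := (Finset.univ : Finset (Fin ⌈y⌉₊))) (n := ⌈x⌉₊)
    (by simpa using hle)
  have hmem : I s.card (subGraph G s) := subGraph_mem hI hG s
  have h1 : fI I x ≤ phi (subGraph G s) := by
    rw [fI_eq_sInf I hcard.symm]
    exact Nat.sInf_le ⟨subGraph G s, hmem, rfl⟩
  have h2 : phi (subGraph G s) ≤ phi G := phi_le_of_embedding (subGraphEmb G s)
  omega

include hall in
omit hI in
lemma fI_one_le {x : ℝ} (hx : 0 < x) : 1 ≤ fI I x := by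
  obtain ⟨G, hG, hphi⟩ := fI_spec hall x
  have hpos : 1 ≤ ⌈x⌉₊ := Nat.one_le_ceil_iff.mpr hx
  have v : Fin ⌈x⌉₊ := ⟨0, hpos⟩
  calc 1 = ({v} : Finset (Fin ⌈x⌉₊)).card := (Finset.card_singleton v).symm
  _ ≤ phi G := le_phi (isCograph_singleton G v)
  _ = fI I x := hphi

include hI in
omit hall in
lemma exists_cograph_subset {n : ℕ} {G : SimpleGraph (Fin n)} (hG : I n G)
    (B : Finset (Fin n)) {t : ℕ} (ht : t ≤ fI I (B.card : ℝ)) :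
    ∃ C : Finset (Fin n), C ⊆ B ∧ C.card = t ∧ IsCograph (G.induce (C : Set (Fin n))) := by
  have h1 : fI I (B.card : ℝ) ≤ phi (subGraph G B) := fI_le_phi (subGraph_mem hI hG B)
  obtain ⟨s, hcard, hs⟩ := phi_spec (subGraph G B)
  have himg := isCograph_image (subGraphEmb G B) s hs
  have hC0B : (s.image (subGraphEmb G B)) ⊆ B := by
    intro a ha
    obtain ⟨i, -, rfl⟩ := Finset.mem_image.mp ha
    exact subEmb_mem B i
  have hC0card : (s.image (subGraphEmb G B)).card = phi (subGraph G B) := by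
    rw [Finset.card_image_of_injective s (subGraphEmb G B).injective, hcard]
  obtain ⟨C, hCs, hCcard⟩ := Finset.exists_subset_card_eq (by omega : t ≤ (s.image (subGraphEmb G B)).card)
  refine ⟨C, hCs.trans hC0B, hCcard, ?_⟩
  exact isCograph_induce_subset G (by exact_mod_cast hCs) himg

end FIlem

section Union
variable {n : ℕ}

lemma cograph_union (G : SimpleGraph (Fin n)) {s t : Finset (Fin n)}
    (hd : Disjoint s t) (hs : IsCograph (G.induce (s : Set (Fin n))))
    (ht : IsCograph (G.induce (t : Set (Fin n))))
    (h : (∀ a ∈ s, ∀ b ∈ t, ¬ G.Adj a b) ∨ (∀ a ∈ s, ∀ b ∈ t, G.Adj a b)) :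
    IsCograph (G.induce ((s ∪ t : Finset (Fin n)) : Set (Fin n))) := by
  rintro ⟨p⟩
  set v : Fin 4 → Fin n := fun i => ((p i : { x // x ∈ ((s ∪ t : Finset (Fin n)) : Set (Fin n)) }) : Fin n) with hv
  have hmem : ∀ i, v i ∈ s ∨ v i ∈ t := by
    intro i
    have := (p i).2
    simpa [Finset.mem_union] using this
  have hinj : ∀ i j, v i = v j → i = j := fun i j hij => p.injective (Subtype.ext hij)
  have hadj_iff : ∀ i j, G.Adj (v i) (v j) ↔ (pathGraph 4).Adj i j := by
    intro i j
    rw [← p.map_rel_iff]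
    exact Iff.rfl
  set P : Fin 4 → Prop := fun i => v i ∈ s with hP
  have hPt : ∀ i, ¬ P i → v i ∈ t := fun i hi => (hmem i).resolve_left hi
  have build : ∀ (u : Finset (Fin n)), (∀ i, v i ∈ u) →
      Nonempty (pathGraph 4 ↪g G.induce (u : Set (Fin n))) := by
    intro u hu
    refine ⟨⟨⟨fun i => ⟨v i, hu i⟩, ?_⟩, ?_⟩⟩
    · intro i j hij
      apply hinj i j
      simpa using hij
    · intro i j
      simp only [Function.Embedding.coeFn_mk, comap_adj, Function.Embedding.coe_subtype]
      exact hadj_iff i j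
  have hiff : ∀ i j : Fin 4, (P i ↔ P j) := by
    rcases h with hanti | hcomp
    · -- adjacent vertices are on the same side
      have cross : ∀ i j, (pathGraph 4).Adj i j → (P i ↔ P j) := by
        intro i j hij
        have hGij : G.Adj (v i) (v j) := (hadj_iff i j).mpr hij
        constructor
        · intro hi
          by_contra hj
          exact hanti (v i) hi (v j) (hPt j hj) hGij
        · intro hj
          by_contra hi
          exact hanti (v j) hj (v i) (hPt i hi) hGij.symm
      have e01 := cross 0 1 (by rw [pathGraph_adj]; decide)
      have e12 := cross 1 2 (by rw [pathGraph_adj]; decide)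
      have e23 := cross 2 3 (by rw [pathGraph_adj]; decide)
      intro i j
      fin_cases i <;> fin_cases j <;> tauto
    · -- non-adjacent vertices are on the same side
      have cross : ∀ i j, i ≠ j → ¬ (pathGraph 4).Adj i j → (P i ↔ P j) := by
        intro i j hne hij
        constructor
        · intro hi
          by_contra hj
          exact hij ((hadj_iff i j).mp (hcomp (v i) hi (v j) (hPt j hj)))
        · intro hj
          by_contra hi
          exact hij (((hadj_iff j i).mp (hcomp (v j) hj (v i) (hPt i hi))).symm)
      have e02 := cross 0 2 (by decide) (by rw [pathGraph_adj]; decide)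
      have e03 := cross 0 3 (by decide) (by rw [pathGraph_adj]; decide)
      have e13 := cross 1 3 (by decide) (by rw [pathGraph_adj]; decide)
      intro i j
      fin_cases i <;> fin_cases j <;> tauto
  by_cases hP0 : P 0
  · exact hs (build s (fun i => (hiff i 0).mpr hP0))
  · exact ht (build t (fun i => hPt i (fun hi => hP0 ((hiff i 0).mp hi))))

end Union

section Markov

lemma sum_filter_card_eq {α β : Type} [DecidableEq α] [DecidableEq β] (r : α → β → Prop)
    (A : Finset α) (B : Finset β) :
    ∑ a ∈ A, (B.filter (r a)).card = (Rel.interedges r A B).card := by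
  rw [Rel.interedges_eq_biUnion, Finset.card_biUnion]
  · simp
  · intro x hx y hy hxy
    simp only [Finset.disjoint_left, Finset.mem_map, Function.Embedding.coeFn_mk]
    rintro ⟨a, b⟩ ⟨b₁, hb₁, h₁⟩ ⟨b₂, hb₂, h₂⟩
    cases h₁; cases h₂
    exact hxy rfl

lemma markov_clean {α β : Type} [DecidableEq α] [DecidableEq β] (r : α → β → Prop)
    (A : Finset α) (B : Finset β) (hB : B.Nonempty) {c : ℝ} (hc : 0 < c)
    (hd : ((Rel.edgeDensity r A B : ℚ) : ℝ) ≤ c) :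
    ∃ A' : Finset α, A' ⊆ A ∧ (A.card : ℝ) / 2 ≤ A'.card ∧
      ∀ a ∈ A', ((B.filter (r a)).card : ℝ) ≤ 2 * c * B.card := by
  have hBpos : (0:ℝ) < B.card := by exact_mod_cast hB.card_pos
  have hE : ((∑ a ∈ A, (B.filter (r a)).card : ℕ) : ℝ) ≤ c * A.card * B.card := by
    rw [sum_filter_card_eq]
    rcases A.eq_empty_or_nonempty with rfl | hA
    · simp
    · have hApos : (0:ℝ) < A.card := by exact_mod_cast hA.card_pos
      rw [Rel.edgeDensity] at hd
      push_cast at hd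
      rw [div_le_iff₀ (by positivity)] at hd
      calc ((Rel.interedges r A B).card : ℝ) ≤ c * (A.card * B.card) := hd
      _ = c * A.card * B.card := by ring
  set pred : α → Prop := fun a => ((B.filter (r a)).card : ℝ) ≤ 2 * c * B.card with hpred
  refine ⟨A.filter pred, Finset.filter_subset _ _, ?_, fun a ha => (Finset.mem_filter.mp ha).2⟩
  set Abad := A.filter (fun a => ¬ pred a) with hAbad
  have hsplit : (A.filter pred).card + Abad.card = A.card :=
    Finset.card_filter_add_card_filter_not (p := pred)
  have hbad : (Abad.card : ℝ) * (2 * c * B.card) ≤ c * A.card * B.card := by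
    have h1 : ∀ a ∈ Abad, (2 * c * B.card) ≤ ((B.filter (r a)).card : ℝ) := by
      intro a ha
      have := (Finset.mem_filter.mp ha).2
      exact (not_le.mp this).le
    have h2 : (Abad.card : ℝ) * (2 * c * B.card) ≤ ∑ a ∈ Abad, ((B.filter (r a)).card : ℝ) := by
      calc (Abad.card : ℝ) * (2 * c * B.card) = Abad.card • (2 * c * B.card) := by
            rw [nsmul_eq_mul]
      _ ≤ ∑ a ∈ Abad, ((B.filter (r a)).card : ℝ) := Finset.card_nsmul_le_sum _ _ _ h1
    refine h2.trans ?_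
    calc ∑ a ∈ Abad, ((B.filter (r a)).card : ℝ)
        = ((∑ a ∈ Abad, (B.filter (r a)).card : ℕ) : ℝ) := by push_cast; ring
      _ ≤ ((∑ a ∈ A, (B.filter (r a)).card : ℕ) : ℝ) := by
          exact_mod_cast Finset.sum_le_sum_of_subset (Finset.filter_subset _ _)
      _ ≤ c * A.card * B.card := hE
  have hbad2 : (Abad.card : ℝ) ≤ (A.card : ℝ) / 2 := by
    have h2cB : (0:ℝ) < 2 * c * B.card := by positivity
    rw [← mul_le_mul_iff_of_pos_right h2cB]
    calc (Abad.card : ℝ) * (2 * c * B.card) ≤ c * A.card * B.card := hbad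
    _ = (A.card : ℝ) / 2 * (2 * c * B.card) := by ring
  have : ((A.filter pred).card : ℝ) = A.card - Abad.card := by
    have := hsplit
    push_cast [← this]
    ring
  rw [this]
  linarith
end Markov

section MainArg

variable {I : ∀ n : ℕ, SimpleGraph (Fin n) → Prop} (hI : Hereditary I)
  (hall : ∀ m : ℕ, ∃ G : SimpleGraph (Fin m), I m G)
  {σ ε c : ℝ} (hσ : 1 ≤ σ) (hε0 : 0 < ε) (hε1 : ε ≤ 1) (hc0 : 0 < c) (hc : c ≤ 1/2)

include hI hall hc0 hε0 in
lemma lemA_core {m : ℕ} (G K : SimpleGraph (Fin m)) (hG : I m G) (A B : Finset (Fin m))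
    (hAB : Disjoint A B) (hBne : B.Nonempty)
    (hAcard : c ^ σ * m ≤ (A.card : ℝ)) (hBcard : ε * m ≤ (B.card : ℝ))
    (hKd : ((K.edgeDensity A B : ℚ) : ℝ) ≤ c)
    (hmode : (∀ a b, ¬ K.Adj a b → ¬ G.Adj a b) ∨ (∀ a b, a ≠ b → ¬ K.Adj a b → G.Adj a b))
    {y : ℝ} (hy0 : 0 ≤ y) (hym : y ≤ (m : ℝ))
    (hsmall : (fI I (c ^ σ * y / 2) : ℝ) < 1 / (4 * c)) :
    fI I (c ^ σ * y / 2) + fI I (ε * y / 2) ≤ phi G := by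
  have hcσ : (0:ℝ) ≤ c ^ σ := (Real.rpow_pos_of_pos hc0 σ).le
  -- clean A
  obtain ⟨A', hA'sub, hA'card, hA'deg⟩ := markov_clean K.Adj A B hBne hc0 hKd
  have hA'y : c ^ σ * y / 2 ≤ ((A'.card : ℕ) : ℝ) := by
    have h1 : c ^ σ * y ≤ c ^ σ * m := mul_le_mul_of_nonneg_left hym hcσ
    have h2 : ((A.card : ℕ) : ℝ) / 2 ≤ A'.card := hA'card
    linarith
  set t := fI I (c ^ σ * y / 2) with htdef
  have htA' : t ≤ fI I ((A'.card : ℕ) : ℝ) := fI_mono hI hall hA'y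
  obtain ⟨C, hCA', hCcard, hCcog⟩ := exists_cograph_subset hI hG A' htA'
  -- clean B
  set p : Fin m → Prop := fun b => ∃ a ∈ C, K.Adj a b with hp
  set Bbad := B.filter p with hBbad
  set B' := B.filter (fun b => ¬ p b) with hB'def
  have hsplit : Bbad.card + B'.card = B.card :=
    Finset.card_filter_add_card_filter_not (p := p)
  have hBpos : (0:ℝ) ≤ (B.card : ℝ) := by positivity
  have hBbadle : (Bbad.card : ℝ) ≤ (t : ℝ) * (2 * c * B.card) := by
    have hsub : Bbad ⊆ C.biUnion (fun a => B.filter (fun b => K.Adj a b)) := by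
      intro b hb
      obtain ⟨hbB, a, haC, hadj⟩ := by
        simpa [hBbad, hp] using hb
      exact Finset.mem_biUnion.mpr ⟨a, haC, Finset.mem_filter.mpr ⟨hbB, hadj⟩⟩
    have h1 : Bbad.card ≤ ∑ a ∈ C, (B.filter (fun b => K.Adj a b)).card :=
      (Finset.card_le_card hsub).trans (Finset.card_biUnion_le)
    have h2 : ∑ a ∈ C, ((B.filter (fun b => K.Adj a b)).card : ℝ) ≤ C.card * (2 * c * B.card) := by
      have := Finset.sum_le_card_nsmul C (fun a => ((B.filter (fun b => K.Adj a b)).card : ℝ))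
        (2 * c * B.card) (fun a ha => hA'deg a (hCA' ha))
      simpa [nsmul_eq_mul] using this
    calc (Bbad.card : ℝ) ≤ ((∑ a ∈ C, (B.filter (fun b => K.Adj a b)).card : ℕ) : ℝ) := by
          exact_mod_cast h1
    _ = ∑ a ∈ C, ((B.filter (fun b => K.Adj a b)).card : ℝ) := by push_cast; ring
    _ ≤ C.card * (2 * c * B.card) := h2
    _ = (t : ℝ) * (2 * c * B.card) := by rw [hCcard]
  have htc : (t : ℝ) * (2 * c) < 1 / 2 := by
    have h4c : (0:ℝ) < 4 * c := by positivity
    rw [lt_div_iff₀ h4c] at hsmall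
    nlinarith
  have hB'y : ε * y / 2 ≤ ((B'.card : ℕ) : ℝ) := by
    have h1 : (B'.card : ℝ) = B.card - Bbad.card := by
      have := hsplit
      push_cast [← this]
      ring
    have h2 : (Bbad.card : ℝ) ≤ (1/2) * B.card := by
      calc (Bbad.card : ℝ) ≤ (t : ℝ) * (2 * c * B.card) := hBbadle
      _ = ((t : ℝ) * (2 * c)) * B.card := by ring
      _ ≤ (1/2) * B.card := mul_le_mul_of_nonneg_right htc.le hBpos
    have h3 : ε * y ≤ ε * m := mul_le_mul_of_nonneg_left hym hε0.le
    linarith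
  have hfD : fI I (ε * y / 2) ≤ fI I ((B'.card : ℕ) : ℝ) := fI_mono hI hall hB'y
  obtain ⟨D, hDB', hDcard, hDcog⟩ :=
    exists_cograph_subset hI hG B' (le_refl (fI I ((B'.card : ℕ) : ℝ)))
  -- combine
  have hB'B : B' ⊆ B := Finset.filter_subset _ _
  have hCD : Disjoint C D := hAB.mono (hCA'.trans hA'sub) (hDB'.trans hB'B)
  have hnoK : ∀ a ∈ C, ∀ b ∈ D, ¬ K.Adj a b := by
    intro a ha b hb hadj
    have hbB' := hDB' hb
    have := (Finset.mem_filter.mp hbB').2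
    exact this ⟨a, ha, hadj⟩
  have hcross : (∀ a ∈ C, ∀ b ∈ D, ¬ G.Adj a b) ∨ (∀ a ∈ C, ∀ b ∈ D, G.Adj a b) := by
    rcases hmode with h1 | h2
    · exact Or.inl (fun a ha b hb => h1 a b (hnoK a ha b hb))
    · refine Or.inr (fun a ha b hb => h2 a b ?_ (hnoK a ha b hb))
      intro heq
      exact (Finset.disjoint_left.mp hCD ha) (heq ▸ hb)
  have hunion := cograph_union G hCD hCcog hDcog hcross
  have hcardu : (C ∪ D).card = C.card + D.card := Finset.card_union_of_disjoint hCD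
  have hle := le_phi (G := G) hunion
  have : fI I (ε * y / 2) ≤ D.card := by rw [hDcard]; exact hfD
  omega

variable (hdens : ∀ (n : ℕ) (G : SimpleGraph (Fin n)), 2 ≤ n → I n G →
      ∀ c' : ℝ, 0 ≤ c' → c' ≤ 1 / 2 →
        ∃ A B : Finset (Fin n), Disjoint A B ∧ A.Nonempty ∧ B.Nonempty ∧
          c' ^ σ * n ≤ (A.card : ℝ) ∧ ε * n ≤ (B.card : ℝ) ∧
          ((G.edgeDensity A B : ℝ) ≤ c' ∨ 1 - c' ≤ (G.edgeDensity A B : ℝ)))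

include hI hall hε0 hc0 hc hdens in
lemma lemA (y : ℝ) (hy2 : 2 ≤ y)
    (hsmall : (fI I (c ^ σ * y / 2) : ℝ) < 1 / (4 * c)) :
    fI I (c ^ σ * y / 2) + fI I (ε * y / 2) ≤ fI I y := by
  obtain ⟨G, hG, hphiG⟩ := fI_spec hall y
  have hm2 : 2 ≤ ⌈y⌉₊ := by
    have := Nat.ceil_mono hy2
    simpa using this
  have hym : y ≤ (⌈y⌉₊ : ℝ) := Nat.le_ceil y
  obtain ⟨A, B, hAB, hAne, hBne, hAc, hBc, hdd⟩ := hdens ⌈y⌉₊ G hm2 hG c hc0.le hc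
  rw [← hphiG]
  have hy0 : (0:ℝ) ≤ y := by linarith
  rcases hdd with hsp | hde
  · exact lemA_core hI hall hε0 hc0 G G hG A B hAB hBne hAc hBc hsp
      (Or.inl fun a b h => h) hy0 hym hsmall
  · have hcompl : ((Gᶜ.edgeDensity A B : ℚ) : ℝ) ≤ c := by
      have hsum := G.edgeDensity_add_edgeDensity_compl hAne hBne hAB
      have h2 : ((Gᶜ.edgeDensity A B : ℚ) : ℝ) = 1 - ((G.edgeDensity A B : ℚ) : ℝ) := by
        have h3 := congrArg (fun q : ℚ => (q : ℝ)) hsum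
        push_cast at h3
        linarith
      rw [h2]; linarith
    refine lemA_core hI hall hε0 hc0 G Gᶜ hG A B hAB hBne hAc hBc ?_ (Or.inr ?_)
      hy0 hym hsmall
    · convert hcompl using 4 <;> try exact Subsingleton.elim _ _
    · intro a b hne hnadj
      by_contra hnG
      exact hnadj ⟨hne, hnG⟩

include hI hall hσ hε0 hε1 hc0 hc hdens in
lemma lemInner {x : ℝ} (hx2 : 2 ≤ x) (hcx : 1 ≤ c ^ σ * x)
    (hsmall : (fI I x : ℝ) < 1 / (4 * c)) (k : ℕ) (hk : 2 * c ^ σ ≤ (ε / 2) ^ k) :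
    ∀ i, i ≤ k → i * fI I (c ^ (2 * σ) * x) + fI I ((ε / 2) ^ i * x) ≤ fI I x := by
  intro i
  induction i with
  | zero =>
    intro _
    simp only [Nat.zero_eq, Nat.zero_mul, pow_zero, one_mul, Nat.zero_add]
    exact le_refl _
  | succ i ih =>
    intro hik
    have hik' : i ≤ k := Nat.le_of_succ_le hik
    have hx0 : (0:ℝ) ≤ x := by linarith
    have hcσpos : (0:ℝ) < c ^ σ := Real.rpow_pos_of_pos hc0 σ
    have hc1 : c ≤ 1 := by linarith
    have hσ0 : (0:ℝ) ≤ σ := by linarith [hσ]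
    have hcσ1 : c ^ σ ≤ 1 := Real.rpow_le_one hc0.le hc1 hσ0
    have hε2 : (0:ℝ) ≤ ε / 2 := by linarith
    have hε21 : ε / 2 ≤ 1 := by linarith
    set y := (ε / 2) ^ i * x with hy
    have hpowle : (ε / 2) ^ i ≤ 1 := pow_le_one₀ hε2 hε21
    have hyx : y ≤ x := by
      have := mul_le_mul_of_nonneg_right hpowle hx0
      simpa [hy] using this
    have hky : (ε / 2) ^ k ≤ (ε / 2) ^ i := pow_le_pow_of_le_one hε2 hε21 hik'
    have h2cy : 2 * c ^ σ * x ≤ y := by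
      have := mul_le_mul_of_nonneg_right (hk.trans hky) hx0
      simpa [hy] using this
    have hy2 : 2 ≤ y := by linarith
    have hy0 : (0:ℝ) ≤ y := by linarith
    have hsm' : (fI I (c ^ σ * y / 2) : ℝ) < 1 / (4 * c) := by
      have hle : c ^ σ * y / 2 ≤ x := by
        nlinarith [mul_le_mul_of_nonneg_right hcσ1 hy0]
      have hmono := fI_mono hI hall hle
      calc (fI I (c ^ σ * y / 2) : ℝ) ≤ fI I x := by exact_mod_cast hmono
      _ < _ := hsmall
    have hA := lemA hI hall hε0 hc0 hc hdens y hy2 hsm'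
    have e1 : fI I (c ^ (2 * σ) * x) ≤ fI I (c ^ σ * y / 2) := by
      refine fI_mono hI hall ?_
      have h1 : c ^ (2 * σ) = c ^ σ * c ^ σ := by rw [two_mul, Real.rpow_add hc0]
      have h2 : c ^ σ * x ≤ y / 2 := by linarith
      calc c ^ (2 * σ) * x = c ^ σ * (c ^ σ * x) := by rw [h1]; ring
      _ ≤ c ^ σ * (y / 2) := mul_le_mul_of_nonneg_left h2 hcσpos.le
      _ = c ^ σ * y / 2 := by ring
    have e2 : fI I ((ε / 2) ^ (i + 1) * x) = fI I (ε * y / 2) := by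
      congr 1
      rw [hy, pow_succ]
      ring
    have hQ := ih hik'
    have h5 : fI I (c ^ (2 * σ) * x) + fI I (ε * y / 2) ≤ fI I y :=
      le_trans (Nat.add_le_add_right e1 _) hA
    calc (i + 1) * fI I (c ^ (2 * σ) * x) + fI I ((ε / 2) ^ (i + 1) * x)
        = i * fI I (c ^ (2 * σ) * x) + (fI I (c ^ (2 * σ) * x) + fI I (ε * y / 2)) := by
          rw [e2, Nat.succ_mul]; ring
    _ ≤ i * fI I (c ^ (2 * σ) * x) + fI I y := Nat.add_le_add_left h5 _
    _ ≤ fI I x := hQ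

include hI hall hσ hε0 hε1 hc0 hc hdens in
lemma lemMain (k : ℕ) (hk : 2 * c ^ σ ≤ (ε / 2) ^ k) :
    ∀ j : ℕ, ∀ x : ℝ, 1 ≤ c ^ (2 * σ * (j:ℝ)) * x → (fI I x : ℝ) < 1 / (4 * c) →
      k ^ j ≤ fI I x := by
  intro j
  induction j with
  | zero =>
    intro x h1 _
    have hz : c ^ (2 * σ * ((0:ℕ):ℝ)) = 1 := by
      rw [show (2 * σ * ((0:ℕ):ℝ)) = 0 by push_cast; ring, Real.rpow_zero]
    rw [hz, one_mul] at h1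
    simpa using fI_one_le hall (by linarith : (0:ℝ) < x)
  | succ j ih =>
    intro x h1 hsmall
    have hc1 : c ≤ 1 := by linarith
    have ha : (0:ℝ) < c ^ (2 * σ * (j:ℝ)) := Real.rpow_pos_of_pos hc0 _
    have hb : (0:ℝ) < c ^ (2 * σ) := Real.rpow_pos_of_pos hc0 _
    have hσ0 : (0:ℝ) ≤ σ := by linarith
    have hsplit : c ^ (2 * σ * ((j+1:ℕ):ℝ)) = c ^ (2 * σ * (j:ℝ)) * c ^ (2 * σ) := by
      rw [← Real.rpow_add hc0]; congr 1; push_cast; ring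
    rw [hsplit, mul_assoc] at h1
    have ha1 : c ^ (2 * σ * (j:ℝ)) ≤ 1 := Real.rpow_le_one hc0.le hc1 (by positivity)
    have hq : c ^ (2 * σ) ≤ 1 / 4 := by
      have h2 : c ^ (2 * σ) ≤ (1/2:ℝ) ^ (2 * σ) :=
        Real.rpow_le_rpow hc0.le hc (by linarith)
      have h3 : ((1:ℝ)/2) ^ (2 * σ) ≤ (1/2:ℝ) ^ (2:ℝ) :=
        Real.rpow_le_rpow_of_exponent_ge (by norm_num) (by norm_num) (by linarith)
      have h4 : ((1:ℝ)/2) ^ (2:ℝ) = 1/4 := by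
        rw [show (2:ℝ) = ((2:ℕ):ℝ) by norm_num, Real.rpow_natCast]; norm_num
      linarith
    have hxpos : (0:ℝ) < x := by nlinarith [mul_pos ha hb]
    have h6 : 1 ≤ c ^ (2 * σ) * x := by
      nlinarith [mul_le_mul_of_nonneg_right ha1 (mul_nonneg hb.le hxpos.le)]
    have hx4 : 4 ≤ x := by nlinarith [mul_le_mul_of_nonneg_right hq hxpos.le]
    have hcσx : 1 ≤ c ^ σ * x := by
      have hee : c ^ (2 * σ * ((j+1:ℕ):ℝ)) ≤ c ^ σ :=
        Real.rpow_le_rpow_of_exponent_ge hc0 hc1 (by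
          have hj0 : (0:ℝ) ≤ (j:ℝ) := Nat.cast_nonneg j
          push_cast
          nlinarith)
      have h1' : 1 ≤ c ^ (2 * σ * ((j+1:ℕ):ℝ)) * x := by
        rw [hsplit, mul_assoc]; exact h1
      nlinarith [mul_le_mul_of_nonneg_right hee hxpos.le]
    have hinner := lemInner hI hall hσ hε0 hε1 hc0 hc hdens (by linarith : (2:ℝ) ≤ x) hcσx
      hsmall k hk k le_rfl
    have hkT : k * fI I (c ^ (2 * σ) * x) ≤ fI I x :=
      le_trans (Nat.le_add_right _ _) hinner
    have hx' : 1 ≤ c ^ (2 * σ * (j:ℝ)) * (c ^ (2 * σ) * x) := h1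
    have hsm' : (fI I (c ^ (2 * σ) * x) : ℝ) < 1 / (4 * c) := by
      have hle : c ^ (2 * σ) * x ≤ x := by nlinarith [mul_le_mul_of_nonneg_right (Real.rpow_le_one hc0.le hc1 (by positivity) : c ^ (2*σ) ≤ 1) hxpos.le]
      have hmono := fI_mono hI hall hle
      calc (fI I (c ^ (2 * σ) * x) : ℝ) ≤ fI I x := by exact_mod_cast hmono
      _ < _ := hsmall
    have hjT := ih (c ^ (2 * σ) * x) hx' hsm'
    calc k ^ (j + 1) = k ^ j * k := pow_succ k j
    _ ≤ fI I (c ^ (2 * σ) * x) * k := Nat.mul_le_mul_right k hjT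
    _ = k * fI I (c ^ (2 * σ) * x) := Nat.mul_comm _ _
    _ ≤ fI I x := hkT

set_option maxHeartbeats 1000000 in
include hI hall hσ hε0 hε1 hc0 hc hdens in
theorem f_power_bound_aux (n : ℕ) (hn : 2 ≤ n) :
    1 / (4 * c) ≤ (fI I n : ℝ) ∨
      ((⌊(σ * Real.logb 2 (1 / c) - 1) / Real.logb 2 (2 / ε)⌋ : ℝ) ^
          ⌊Real.logb 2 n / (4 * σ * Real.logb 2 (1 / c))⌋ : ℝ) ≤ (fI I n : ℝ) := by
  by_cases hcase : 1 / (4 * c) ≤ (fI I n : ℝ)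
  · exact Or.inl hcase
  right
  have hsmall : (fI I n : ℝ) < 1 / (4 * c) := not_le.mp hcase
  set L := Real.logb 2 (1 / c) with hLdef
  set D := Real.logb 2 (2 / ε) with hDdef
  have h2pos : (0:ℝ) < 2 := by norm_num
  have h2ne : (2:ℝ) ≠ 1 := by norm_num
  have hc2 : (2:ℝ) ≤ 1 / c := by rw [le_div_iff₀ hc0]; linarith
  have hε2 : (2:ℝ) ≤ 2 / ε := by rw [le_div_iff₀ hε0]; nlinarith
  have hL1 : 1 ≤ L := by
    have := Real.logb_le_logb_of_le (b := 2) (by norm_num) (by norm_num : (0:ℝ) < 2) hc2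
    rwa [Real.logb_self_eq_one (by norm_num)] at this
  have hD1 : 1 ≤ D := by
    have := Real.logb_le_logb_of_le (b := 2) (by norm_num) (by norm_num : (0:ℝ) < 2) hε2
    rwa [Real.logb_self_eq_one (by norm_num)] at this
  have hD0 : (0:ℝ) < D := by linarith
  have hσL : 1 ≤ σ * L := by nlinarith
  have hknonneg : (0:ℝ) ≤ (σ * L - 1) / D := div_nonneg (by linarith) hD0.le
  have hjnonneg : (0:ℝ) ≤ Real.logb 2 n / (4 * σ * L) := by
    apply div_nonneg
    · apply Real.logb_nonneg (by norm_num)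
      exact_mod_cast Nat.one_le_of_lt hn
    · nlinarith
  set kN := ⌊(σ * L - 1) / D⌋₊ with hkNdef
  set jN := ⌊Real.logb 2 n / (4 * σ * L)⌋₊ with hjNdef
  -- c = 2 ^ (-L), ε/2 = 2^(-D)
  have hc2L : c = (2:ℝ) ^ (-L) := by
    rw [← Real.rpow_logb h2pos h2ne hc0]
    congr 1
    rw [hLdef, one_div, Real.logb_inv]
    ring
  have hε2D : ε / 2 = (2:ℝ) ^ (-D) := by
    rw [← Real.rpow_logb h2pos h2ne (by positivity : (0:ℝ) < ε / 2)]
    congr 1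
    rw [hDdef, show ε / 2 = (2 / ε)⁻¹ by rw [inv_div], Real.logb_inv]
  have hcσ : c ^ σ = (2:ℝ) ^ (-(σ * L)) := by
    rw [hc2L, ← Real.rpow_mul (by norm_num : (0:ℝ) ≤ 2)]
    congr 1
    ring
  -- hypothesis hk for lemMain
  have hk : 2 * c ^ σ ≤ (ε / 2) ^ kN := by
    have hfl : ((kN : ℕ) : ℝ) ≤ (σ * L - 1) / D := Nat.floor_le hknonneg
    have hkD : ((kN : ℕ) : ℝ) * D ≤ σ * L - 1 := by
      rw [← le_div_iff₀ hD0]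
      exact hfl
    have hpow : ((ε / 2):ℝ) ^ kN = (2:ℝ) ^ (-(D * kN)) := by
      rw [hε2D, ← Real.rpow_natCast ((2:ℝ) ^ (-D)) kN, ← Real.rpow_mul (by norm_num : (0:ℝ) ≤ 2)]
      congr 1
      ring
    have h2c : 2 * c ^ σ = (2:ℝ) ^ (1 - σ * L) := by
      rw [hcσ, show (1:ℝ) - σ * L = 1 + (-(σ * L)) by ring, Real.rpow_add h2pos,
        Real.rpow_one]
    rw [h2c, hpow]
    apply Real.rpow_le_rpow_of_exponent_le (by norm_num)
    nlinarith
  -- hypothesis hj for lemMain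
  have hnpos : (0:ℝ) < (n : ℝ) := by
    have : 0 < n := by omega
    exact_mod_cast this
  have hlogn0 : 0 ≤ Real.logb 2 n :=
    Real.logb_nonneg (by norm_num) (by exact_mod_cast Nat.one_le_of_lt hn)
  have hj : 1 ≤ c ^ (2 * σ * (jN:ℝ)) * n := by
    have hfl : ((jN:ℕ):ℝ) ≤ Real.logb 2 n / (4 * σ * L) := Nat.floor_le hjnonneg
    have h4 : ((jN:ℕ):ℝ) * (4 * σ * L) ≤ Real.logb 2 n := by
      rw [← le_div_iff₀ (by nlinarith : (0:ℝ) < 4 * σ * L)]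
      exact hfl
    have hjN0 : (0:ℝ) ≤ (jN:ℝ) := Nat.cast_nonneg _
    have hcpow : c ^ (2 * σ * (jN:ℝ)) = (2:ℝ) ^ (-(2 * σ * (jN:ℝ) * L)) := by
      rw [hc2L, ← Real.rpow_mul (by norm_num : (0:ℝ) ≤ 2)]
      congr 1; ring
    have hnr : ((n:ℕ):ℝ) = (2:ℝ) ^ (Real.logb 2 n) := (Real.rpow_logb h2pos h2ne hnpos).symm
    rw [hcpow]
    calc (1:ℝ) = (2:ℝ) ^ (0:ℝ) := (Real.rpow_zero 2).symm
    _ ≤ (2:ℝ) ^ (-(2 * σ * (jN:ℝ) * L) + Real.logb 2 n) := by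
        apply Real.rpow_le_rpow_of_exponent_le (by norm_num)
        nlinarith [h4, mul_nonneg (mul_nonneg (show (0:ℝ) ≤ σ by linarith)
          (show (0:ℝ) ≤ L by linarith)) hjN0]
    _ = (2:ℝ) ^ (-(2 * σ * (jN:ℝ) * L)) * n := by
        rw [Real.rpow_add h2pos, ← hnr]
  have hmain := lemMain hI hall hσ hε0 hε1 hc0 hc hdens kN hk jN (n:ℝ) hj hsmall
  rw [← Int.natCast_floor_eq_floor hknonneg, ← Int.natCast_floor_eq_floor hjnonneg]
  rw [zpow_natCast, Int.cast_natCast]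
  exact_mod_cast hmain

end MainArg

/-- Step (3): for all `n ≥ 2` and `0 < c ≤ 1/2` with `log n ≥ 2σ log(1/c)`, either
`f(n) ≥ 1/(4c)` or `f(n) ≥ k^j` where `k = ⌊(σ log(1/c) - 1)/log(2/ε)⌋` and
`j = ⌊log n/(4σ log(1/c))⌋` (logs base 2). -/
theorem f_power_bound
    (I : ∀ n : ℕ, SimpleGraph (Fin n) → Prop) (hI : Hereditary I)
    (hall : ∀ m : ℕ, ∃ G : SimpleGraph (Fin m), I m G)
    (σ ε : ℝ) (hσ : 1 ≤ σ) (hε0 : 0 < ε) (hε1 : ε ≤ 1)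
    (hdens : ∀ (n : ℕ) (G : SimpleGraph (Fin n)), 2 ≤ n → I n G →
      ∀ c : ℝ, 0 ≤ c → c ≤ 1 / 2 →
        ∃ A B : Finset (Fin n), Disjoint A B ∧ A.Nonempty ∧ B.Nonempty ∧
          c ^ σ * n ≤ (A.card : ℝ) ∧ ε * n ≤ (B.card : ℝ) ∧
          ((G.edgeDensity A B : ℝ) ≤ c ∨ 1 - c ≤ (G.edgeDensity A B : ℝ)))
    (n : ℕ) (hn : 2 ≤ n) (c : ℝ) (hc0 : 0 < c) (hc : c ≤ 1 / 2)
    (hlog : 2 * σ * Real.logb 2 (1 / c) ≤ Real.logb 2 n) :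
    1 / (4 * c) ≤ (fI I n : ℝ) ∨
      ((⌊(σ * Real.logb 2 (1 / c) - 1) / Real.logb 2 (2 / ε)⌋ : ℝ) ^
          ⌊Real.logb 2 n / (4 * σ * Real.logb 2 (1 / c))⌋ : ℝ) ≤ (fI I n : ℝ) := by
  exact f_power_bound_aux hI hall hσ hε0 hε1 hc0 hc hdens n hn
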